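/- For α ≥ 3, there is no differentiable function g : [0, π] → ℝ satisfying g'(θ) > g(θ)² - g(θ)·cot θ - 1 + 4α·cos²θ + 4α²·sin²θ·cos²θ for all θ ∈ (0, π). -/

import Mathlib

open Real Set

set_option maxHeartbeats 2000000 in
lemma key_arith (α s co v D : ℝ) (hα : 3 ≤ α) (hs : 0 < s) (hsc : s^2 + co^2 = 1)
    (hD : v^2 - v*(co/s) - 1 + 4*α*co^2 + 4*α^2*s^2*co^2 < D - 1/(2*s^2)) :
    (2 + (3/2)*(2*co^2-1) - (3/4)*(2*(2*co^2-1)^2-1)) * (1 + ((v - co/(2*s))/(7/2))^2)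
      < D / (7/2) := by
  have hs2 : (0:ℝ) < s^2 := by positivity
  have hsne : s ≠ 0 := ne_of_gt hs
  have hco2 : co^2 = 1 - s^2 := by linarith
  have hs2le : s^2 ≤ 1 := by nlinarith [sq_nonneg co]
  have hD0 : (2*(s*v)-co)^2 - co^2 - 4*s^2 + 16*α*(s^2*co^2) + 16*α^2*((s^2*s^2)*co^2)
      < 4*(s^2*D) - 2 := by
    have h2 : 4*(s^2*(v^2 - v*(co/s) - 1 + 4*α*co^2 + 4*α^2*s^2*co^2))
        = (2*(s*v)-co)^2 - co^2 - 4*s^2 + 16*α*(s^2*co^2) + 16*α^2*((s^2*s^2)*co^2) := by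
      field_simp; ring
    have h3 : 4*(s^2*(D - 1/(2*s^2))) = 4*(s^2*D) - 2 := by field_simp; ring
    nlinarith [mul_lt_mul_of_pos_left hD hs2]
  rw [hco2] at hD0
  have e : (2 + (3/2)*(2*co^2-1) - (3/4)*(2*(2*co^2-1)^2-1)) * (1 + ((v - co/(2*s))/(7/2))^2)
      = ((-1/4 + 9*co^2 - 6*(co^2*co^2)) * (49*s^2 + (2*(s*v)-co)^2)) / (49*s^2) := by
    field_simp; ring
  rw [e, div_lt_div_iff₀ (by positivity) (by norm_num), hco2]
  have hphi1 : 0 ≤ 3/4 - 3*s^2 + 6*(s^2*s^2) := by nlinarith [sq_nonneg (s^2 - 1/4)]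
  have hq1 : 48*(s^2*(1-s^2)) ≤ 16*α*(s^2*(1-s^2)) := by
    have : 0 ≤ (16*α - 48) * (s^2*(1-s^2)) :=
      mul_nonneg (by linarith) (mul_nonneg hs2.le (by linarith))
    linarith
  have hq2 : 144*((s^2*s^2)*(1-s^2)) ≤ 16*α^2*((s^2*s^2)*(1-s^2)) := by
    have : 0 ≤ (16*α^2 - 144) * ((s^2*s^2)*(1-s^2)) :=
      mul_nonneg (by nlinarith) (mul_nonneg (by positivity) (by linarith))
    linarith
  nlinarith [hD0, hq1, hq2, mul_nonneg hphi1 (sq_nonneg (2*(s*v)-co)),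
    mul_nonneg (mul_nonneg hs2.le hs2.le) (by linarith : (0:ℝ) ≤ 1 - s^2),
    mul_nonneg hs2.le (by linarith : (0:ℝ) ≤ 91/4 - 21*s^2)]

/-- For `α ≥ 3` there is no differentiable `g : [0, π] → ℝ` satisfying the
quadrupole determining inequality on `(0, π)`. -/
theorem no_foliation_alpha_ge_three (α : ℝ) (hα : α ≥ 3) :
    ¬ ∃ g g' : ℝ → ℝ,
      (∀ θ ∈ Set.Icc (0 : ℝ) π, HasDerivWithinAt g (g' θ) (Set.Icc 0 π) θ) ∧
      (∀ θ ∈ Set.Ioo (0 : ℝ) π,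
        g' θ > (g θ) ^ 2 - g θ * (cos θ / sin θ) - 1
          + 4 * α * (cos θ) ^ 2 + 4 * α ^ 2 * (sin θ) ^ 2 * (cos θ) ^ 2) := by
  rintro ⟨g, g', hderiv, hineq⟩
  have hπ : (0:ℝ) < π := pi_pos
  set F : ℝ → ℝ := fun t =>
    arctan ((g t - cos t / (2 * sin t)) / (7/2))
      - (2*t + (3/4)*Real.sin (2*t) - (3/16)*Real.sin (4*t)) with hFdef
  have key : ∀ θ ∈ Icc (π/8) (7*π/8), ∃ d, HasDerivAt F d θ ∧ 0 < d := by
    intro θ hθ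
    have h0 : 0 < θ := by
      have := hθ.1; nlinarith
    have h1 : θ < π := by
      have := hθ.2; nlinarith
    have hsin : 0 < sin θ := sin_pos_of_pos_of_lt_pi h0 h1
    have hsne : sin θ ≠ 0 := ne_of_gt hsin
    have hg : HasDerivAt g (g' θ) θ :=
      (hderiv θ ⟨h0.le, h1.le⟩).hasDerivAt (Icc_mem_nhds h0 h1)
    -- derivative of cos/(2 sin)
    have hden : (2:ℝ) * sin θ ≠ 0 := by positivity
    have hqd : HasDerivAt (fun t => cos t / (2 * sin t)) (-(1/(2 * sin θ^2))) θ := by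
      have hdc : HasDerivAt (fun t => cos t / (2 * sin t)) _ θ := (Real.hasDerivAt_cos θ).div ((Real.hasDerivAt_sin θ).const_mul 2) hden
      convert hdc using 1
      have hsc := sin_sq_add_cos_sq θ
      field_simp
      linear_combination hsc
    have hu' : HasDerivAt (fun t => g t - cos t / (2 * sin t)) (g' θ + 1/(2 * sin θ^2)) θ := by
      have h := (hg.sub hqd : HasDerivAt (fun t => g t - cos t / (2 * sin t)) _ θ)
      rwa [sub_neg_eq_add] at h
    have hdivc : HasDerivAt (fun t => (g t - cos t / (2 * sin t)) / (7/2))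
        ((g' θ + 1/(2 * sin θ^2)) / (7/2)) θ := hu'.div_const _
    have harc := hdivc.arctan
    -- derivative of the antiderivative part
    have d1 : HasDerivAt (fun t : ℝ => 2*t) 2 θ := by
      simpa using (hasDerivAt_id θ).const_mul 2
    have d2 : HasDerivAt (fun t : ℝ => Real.sin (2*t)) (cos (2*θ) * 2) θ := by
      have h2 : HasDerivAt (fun t : ℝ => 2*t) 2 θ := by
        simpa using (hasDerivAt_id θ).const_mul 2
      exact (Real.hasDerivAt_sin (2*θ)).comp θ h2
    have d4 : HasDerivAt (fun t : ℝ => Real.sin (4*t)) (cos (4*θ) * 4) θ := by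
      have h4 : HasDerivAt (fun t : ℝ => 4*t) 4 θ := by
        simpa using (hasDerivAt_id θ).const_mul 4
      exact (Real.hasDerivAt_sin (4*θ)).comp θ h4
    have hΦ : HasDerivAt (fun t : ℝ => 2*t + (3/4)*Real.sin (2*t) - (3/16)*Real.sin (4*t))
        (2 + (3/4)*(cos (2*θ) * 2) - (3/16)*(cos (4*θ) * 4)) θ :=
      (d1.add (d2.const_mul (3/4))).sub (d4.const_mul (3/16))
    refine ⟨_, harc.sub hΦ, ?_⟩
    -- positivity of the derivative
    have hD : (g θ)^2 - (g θ)*(cos θ/sin θ) - 1 + 4*α*(cos θ)^2 + 4*α^2*(sin θ)^2*(cos θ)^2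
        < (g' θ + 1/(2 * sin θ^2)) - 1/(2*(sin θ)^2) := by
      have h := hineq θ ⟨h0, h1⟩
      have he : (g' θ + 1/(2 * sin θ^2)) - 1/(2*(sin θ)^2) = g' θ := by ring
      rw [he]; linarith
    have hmain := key_arith α (sin θ) (cos θ) (g θ) (g' θ + 1/(2 * sin θ^2)) hα hsin
      (sin_sq_add_cos_sq θ) hD
    have hc2 : cos (2*θ) = 2*(cos θ)^2 - 1 := cos_two_mul θ
    have hc4 : cos (4*θ) = 2*(2*(cos θ)^2-1)^2 - 1 := by
      rw [show (4*θ : ℝ) = 2*(2*θ) by ring, cos_two_mul, cos_two_mul]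
    rw [sub_pos, hc2, hc4]
    have hx : (0:ℝ) < 1 + ((g θ - cos θ / (2 * sin θ)) / (7/2))^2 := by positivity
    rw [one_div, ← div_eq_inv_mul, lt_div_iff₀ hx]
    calc (2 + (3/4)*((2*(cos θ)^2-1) * 2) - (3/16)*((2*(2*(cos θ)^2-1)^2-1) * 4))
          * (1 + ((g θ - cos θ / (2 * sin θ)) / (7/2))^2)
        = (2 + (3/2)*(2*(cos θ)^2-1) - (3/4)*(2*(2*(cos θ)^2-1)^2-1))
          * (1 + ((g θ - cos θ/(2*sin θ))/(7/2))^2) := by ring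
      _ < (g' θ + 1/(2 * sin θ^2)) / (7/2) := hmain
  -- F is strictly monotone on [π/8, 7π/8]
  have hab : π/8 < 7*π/8 := by nlinarith
  have hmono : StrictMonoOn F (Icc (π/8) (7*π/8)) := by
    apply strictMonoOn_of_deriv_pos (convex_Icc _ _)
    · intro x hx
      exact ((key x hx).choose_spec.1).continuousAt.continuousWithinAt
    · intro x hx
      rw [interior_Icc] at hx
      obtain ⟨d, hd, hp⟩ := key x (Ioo_subset_Icc_self hx)
      rwa [hd.deriv]
  have hlt := hmono (left_mem_Icc.mpr hab.le) (right_mem_Icc.mpr hab.le) hab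
  rw [hFdef] at hlt
  simp only at hlt
  -- evaluate the trig terms
  have e1 : Real.sin (2*(π/8)) = Real.sqrt 2 / 2 := by
    rw [show (2*(π/8) : ℝ) = π/4 by ring, sin_pi_div_four]
  have e2 : Real.sin (4*(π/8)) = 1 := by
    rw [show (4*(π/8) : ℝ) = π/2 by ring, sin_pi_div_two]
  have e3 : Real.sin (2*(7*π/8)) = -(Real.sqrt 2 / 2) := by
    rw [show (2*(7*π/8) : ℝ) = -(π/4) + 2*π by ring, sin_add_two_pi, sin_neg, sin_pi_div_four]
  have e4 : Real.sin (4*(7*π/8)) = -1 := by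
    rw [show (4*(7*π/8) : ℝ) = -(π/2) + 2*π + 2*π by ring, sin_add_two_pi, sin_add_two_pi,
      sin_neg, sin_pi_div_two]
  rw [e1, e2, e3, e4] at hlt
  have hs2 : Real.sqrt 2 < 3/2 := by
    rw [show (3/2 : ℝ) = Real.sqrt ((3/2)^2) by rw [Real.sqrt_sq (by norm_num)]]
    apply Real.sqrt_lt_sqrt (by norm_num)
    norm_num
  have hpi3 : (3:ℝ) < π := pi_gt_three
  have ha1 := arctan_lt_pi_div_two ((g (7*π/8) - cos (7*π/8) / (2 * sin (7*π/8))) / (7/2))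
  have ha2 := neg_pi_div_two_lt_arctan ((g (π/8) - cos (π/8) / (2 * sin (π/8))) / (7/2))
  linarith
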